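/- For every integer k ≥ 1, the power series identity (2·arcsin(X/2))^{2k} = (2k)! · ∑_{n≥k} H^{(2)}_{k-1}(n) / (n² · C(2n,n)) · X^{2n} holds, where H^{(2)}_0(n) = 1 and H^{(2)}_r(n) = ∑_{0<m₁<⋯<m_r<n} 1/(m₁²⋯m_r²). -/

import Mathlib

/-- `H^{(2)}_r(n) = ∑_{0<m₁<⋯<m_r<n} 1/(m₁²⋯m_r²)`, with `H^{(2)}_0(n) = 1`. -/
noncomputable def H2 (r n : ℕ) : ℝ :=
  ∑ s ∈ Finset.powersetCard r (Finset.Icc 1 (n - 1)), ∏ m ∈ s, 1 / (m : ℝ) ^ 2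

namespace ArcsinPow

noncomputable def c (k n : ℕ) : ℝ :=
  if k = 0 then (if n = 0 then 1 else 0)
  else ((2*k).factorial : ℝ) * H2 (k-1) n / ((n:ℝ)^2 * ((2*n).choose n))

lemma H2_nonneg (r n : ℕ) : 0 ≤ H2 r n := by
  apply Finset.sum_nonneg
  intro s _
  apply Finset.prod_nonneg
  intro m _
  positivity

lemma H2_zero_left (n : ℕ) : H2 0 n = 1 := by
  simp [H2]

lemma H2_eq_zero {r n : ℕ} (h : n - 1 < r) : H2 r n = 0 := by
  unfold H2
  rw [Finset.powersetCard_eq_empty.mpr (by simpa using h), Finset.sum_empty]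

lemma H2_succ (r n : ℕ) (hn : 1 ≤ n) :
    H2 (r+1) (n+1) = H2 (r+1) n + H2 r n / (n:ℝ)^2 := by
  obtain ⟨m, rfl⟩ : ∃ m, n = m + 1 := ⟨n - 1, by omega⟩
  unfold H2
  have hicc : Finset.Icc 1 (m + 1 + 1 - 1) = insert (m+1) (Finset.Icc 1 (m+1-1)) := by
    ext x
    simp only [Finset.mem_Icc, Finset.mem_insert]
    omega
  have hnot : (m+1) ∉ Finset.Icc 1 (m+1-1) := by
    simp only [Finset.mem_Icc]; omega
  rw [hicc, Finset.powersetCard_succ_insert hnot]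
  have hdisj : Disjoint (Finset.powersetCard (r+1) (Finset.Icc 1 (m+1-1)))
      ((Finset.powersetCard r (Finset.Icc 1 (m+1-1))).image (insert (m+1))) := by
    rw [Finset.disjoint_left]
    intro a ha hb
    obtain ⟨hsub, -⟩ := Finset.mem_powersetCard.mp ha
    obtain ⟨t, -, rfl⟩ := Finset.mem_image.mp hb
    exact hnot (hsub (Finset.mem_insert_self _ _))
  rw [Finset.sum_union hdisj]
  congr 1
  rw [Finset.sum_image]
  · rw [Finset.sum_div]
    apply Finset.sum_congr rfl
    intro t ht
    obtain ⟨hsub, -⟩ := Finset.mem_powersetCard.mp ht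
    have hmt : (m+1) ∉ t := fun h => hnot (hsub h)
    rw [Finset.prod_insert hmt]
    push_cast
    field_simp
  · intro t ht t' ht' h
    obtain ⟨hsub, -⟩ := Finset.mem_powersetCard.mp ht
    obtain ⟨hsub', -⟩ := Finset.mem_powersetCard.mp ht'
    have h1 : (m+1) ∉ t := fun hh => hnot (hsub hh)
    have h2 : (m+1) ∉ t' := fun hh => hnot (hsub' hh)
    rw [← Finset.erase_insert h1, ← Finset.erase_insert h2, h]

lemma H2_one (r : ℕ) : H2 (r+1) 1 = 0 := H2_eq_zero (by omega)

lemma c_zero_right (k : ℕ) (hk : k ≠ 0) : c k 0 = 0 := by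
  simp [c, hk]

lemma c_succ (k n : ℕ) :
    c (k+1) n = ((2*(k+1)).factorial : ℝ) * H2 k n / ((n:ℝ)^2 * ((2*n).choose n)) := by
  rw [c, if_neg (Nat.succ_ne_zero k), Nat.add_sub_cancel]

lemma c_rec (k n : ℕ) :
    4*(2*(n:ℝ)+2)*(2*(n:ℝ)+1) * c (k+1) (n+1) - 4*(n:ℝ)^2 * c (k+1) n
      = (8*((k:ℝ)+1))*(2*((k:ℝ)+1)-1)*c k n := by
  have hC : ∀ m : ℕ, (0:ℝ) < ((2*m).choose m) := by
    intro m
    exact_mod_cast Nat.choose_pos (by omega)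
  have hcb : ((n:ℝ)+1) * ((2*(n+1)).choose (n+1)) = 2*(2*(n:ℝ)+1) * ((2*n).choose n) := by
    have := Nat.succ_mul_centralBinom_succ n
    have h2 : ((n+1) * Nat.centralBinom (n+1) : ℝ) = (2 * (2*n+1) * Nat.centralBinom n : ℝ) := by
      exact_mod_cast congrArg (Nat.cast : ℕ → ℝ) this
    unfold Nat.centralBinom at h2
    push_cast at h2 ⊢
    linarith
  -- main lhs reduction:
  have key : 4*(2*(n:ℝ)+2)*(2*(n:ℝ)+1) * c (k+1) (n+1)
      = 4 * ((2*(k+1)).factorial : ℝ) * H2 k (n+1) / ((2*n).choose n) := by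
    have h1 : ((n+1:ℕ):ℝ) ≠ 0 := Nat.cast_ne_zero.mpr (Nat.succ_ne_zero n)
    have hd : ((n+1:ℕ):ℝ)^2 * (((2*(n+1)).choose (n+1) : ℕ):ℝ) ≠ 0 :=
      mul_ne_zero (pow_ne_zero 2 h1) (ne_of_gt (hC (n+1)))
    rw [c_succ, ← mul_div_assoc,
      div_eq_div_iff hd (ne_of_gt (hC n))]
    push_cast
    have h2 : ((n:ℝ)+1)^2 * (((2*(n+1)).choose (n+1) : ℕ):ℝ)
        = ((n:ℝ)+1) * (2*(2*(n:ℝ)+1) * (((2*n).choose n : ℕ):ℝ)) := by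
      rw [pow_two, mul_assoc, hcb]
    rw [h2]
    ring
  rw [key]
  rcases Nat.eq_zero_or_pos n with rfl | hn
  · -- n = 0
    rcases Nat.eq_zero_or_pos k with rfl | hk
    · norm_num [c, H2_zero_left]
    · obtain ⟨j, rfl⟩ : ∃ j, k = j + 1 := ⟨k-1, by omega⟩
      rw [H2_one]
      rw [c_zero_right _ (by omega), c_zero_right _ (by omega)]
      norm_num
  · -- n ≥ 1
    rcases Nat.eq_zero_or_pos k with rfl | hk
    · -- k = 0
      have hc0 : c 0 n = 0 := by
        unfold c
        rw [if_pos rfl, if_neg (show ¬ n = 0 by omega)]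
      rw [hc0, c_succ, H2_zero_left, H2_zero_left]
      have hn0 : ((n:ℝ)) ≠ 0 := by positivity
      have hCn0 : (((2*n).choose n : ℕ):ℝ) ≠ 0 := ne_of_gt (hC n)
      field_simp
      ring
    · obtain ⟨j, rfl⟩ : ∃ j, k = j + 1 := ⟨k-1, by omega⟩
      rw [H2_succ j n hn, c_succ, c_succ]
      have hfac : ((2*(j+1+1)).factorial : ℝ)
          = (2*(j:ℝ)+4)*(2*(j:ℝ)+3)*((2*(j+1)).factorial : ℝ) := by
        have : 2*(j+1+1) = (2*(j+1)+1) + 1 := by ring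
        rw [this, Nat.factorial_succ, Nat.factorial_succ]
        push_cast
        ring
      rw [hfac]
      have hn0 : ((n:ℝ)) ≠ 0 := by positivity
      have hCn0 : (((2*n).choose n : ℕ):ℝ) ≠ 0 := ne_of_gt (hC n)
      field_simp
      push_cast
      ring


noncomputable def B : ℝ := Real.exp (∑' m : ℕ, 1 / (m:ℝ)^2)

lemma summable_inv_sq : Summable (fun m : ℕ => 1 / (m:ℝ)^2) :=
  Real.summable_one_div_nat_pow.mpr one_lt_two

lemma one_le_B : 1 ≤ B := by
  rw [B, ← Real.exp_zero, Real.exp_le_exp]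
  exact tsum_nonneg (fun m => by positivity)

lemma H2_le_B (r n : ℕ) : H2 r n ≤ B := by
  have h1 : H2 r n ≤ ∑ t ∈ (Finset.Icc 1 (n-1)).powerset, ∏ m ∈ t, 1 / (m:ℝ)^2 := by
    apply Finset.sum_le_sum_of_subset_of_nonneg
    · intro t ht
      exact Finset.mem_powerset.mpr (Finset.mem_powersetCard.mp ht).1
    · intro t _ _
      apply Finset.prod_nonneg; intro m _; positivity
  have h2 : ∑ t ∈ (Finset.Icc 1 (n-1)).powerset, ∏ m ∈ t, 1 / (m:ℝ)^2
      = ∏ m ∈ Finset.Icc 1 (n-1), (1 / (m:ℝ)^2 + 1) := by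
    rw [Finset.prod_add]
    simp
  have h3 : ∏ m ∈ Finset.Icc 1 (n-1), (1 / (m:ℝ)^2 + 1)
      ≤ ∏ m ∈ Finset.Icc 1 (n-1), Real.exp (1 / (m:ℝ)^2) := by
    apply Finset.prod_le_prod
    · intro m _; positivity
    · intro m _
      exact Real.add_one_le_exp _
  have h4 : ∏ m ∈ Finset.Icc 1 (n-1), Real.exp (1 / (m:ℝ)^2)
      = Real.exp (∑ m ∈ Finset.Icc 1 (n-1), 1 / (m:ℝ)^2) := (Real.exp_sum _ _).symm
  have h5 : Real.exp (∑ m ∈ Finset.Icc 1 (n-1), 1 / (m:ℝ)^2) ≤ B := by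
    rw [B, Real.exp_le_exp]
    exact Summable.sum_le_tsum _ (fun m _ => by positivity) summable_inv_sq
  calc H2 r n ≤ _ := h1
    _ = _ := h2
    _ ≤ _ := h3
    _ = _ := h4
    _ ≤ B := h5

lemma c_nonneg (k n : ℕ) : 0 ≤ c k n := by
  unfold c
  split
  · split <;> norm_num
  · apply div_nonneg
    · exact mul_nonneg (by positivity) (H2_nonneg _ _)
    · positivity

lemma four_pow_le (n : ℕ) : (4:ℝ)^n ≤ (2*(n:ℝ)+1) * ((2*n).choose n) := by
  rcases Nat.eq_zero_or_pos n with rfl | hn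
  · norm_num
  · have h := Nat.four_pow_le_two_mul_self_mul_centralBinom n hn
    unfold Nat.centralBinom at h
    have h2 : (4:ℝ)^n ≤ (2*(n:ℝ)) * ((2*n).choose n) := by exact_mod_cast h
    have hC : (0:ℝ) ≤ ((2*n).choose n : ℕ) := by positivity
    nlinarith

lemma c_bound (k n : ℕ) : c k n ≤ ((2*k).factorial : ℝ) * B * ((2*(n:ℝ)+1) / 4^n) := by
  rcases Nat.eq_zero_or_pos k with rfl | hk
  · unfold c
    rcases Nat.eq_zero_or_pos n with rfl | hn
    · simp only [if_pos rfl]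
      norm_num
      nlinarith [one_le_B]
    · simp only [if_pos rfl, if_neg (show ¬ n = 0 by omega)]
      exact mul_nonneg (mul_nonneg (by positivity) (le_trans zero_le_one one_le_B)) (by positivity)
  · rcases Nat.eq_zero_or_pos n with rfl | hn
    · unfold c
      rw [if_neg (by omega)]
      norm_num
      exact mul_nonneg (by positivity) (le_trans zero_le_one one_le_B)
    · unfold c
      rw [if_neg (by omega)]
      have hC : (0:ℝ) < ((2*n).choose n : ℕ) := by
        exact_mod_cast Nat.choose_pos (by omega)
      have hn1 : (1:ℝ) ≤ (n:ℝ)^2 := by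
        have : (1:ℝ) ≤ (n:ℝ) := by exact_mod_cast hn
        nlinarith
      rw [div_le_iff₀ (by positivity)]
      have hH := H2_le_B (k-1) n
      have hHn := H2_nonneg (k-1) n
      have h4 := four_pow_le n
      have hfac : (1:ℝ) ≤ ((2*k).factorial : ℕ) := by exact_mod_cast Nat.one_le_iff_ne_zero.mpr (Nat.factorial_ne_zero _)
      have hB := one_le_B
      have h4p : (0:ℝ) < 4^n := by positivity
      have key2 : (1:ℝ) ≤ (2*(n:ℝ)+1) / 4^n * ((n:ℝ)^2 * ((2*n).choose n)) := by
        rw [div_mul_eq_mul_div, le_div_iff₀ h4p]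
        nlinarith
      calc ((2*k).factorial : ℝ) * H2 (k-1) n ≤ ((2*k).factorial : ℝ) * B := by nlinarith
        _ = ((2*k).factorial : ℝ) * B * 1 := (mul_one _).symm
        _ ≤ ((2*k).factorial : ℝ) * B * ((2*(n:ℝ)+1) / 4^n * ((n:ℝ)^2 * ((2*n).choose n))) := by
            apply mul_le_mul_of_nonneg_left key2 (by nlinarith)
        _ = ((2*k).factorial : ℝ) * B * ((2*(n:ℝ)+1) / 4^n) * ((n:ℝ)^2 * ((2*n).choose n)) := by
            ring

lemma summable_geom_aux (j : ℕ) {q : ℝ} (h0 : 0 < q) (hq : q < 1) :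
    Summable (fun n : ℕ => ((n:ℝ)+1)^j * q^n) := by
  have hs : Summable (fun n : ℕ => (n:ℝ)^j * q^n) := by
    have := summable_pow_mul_geometric_of_norm_lt_one (R := ℝ) j (r := q)
      (by rwa [Real.norm_eq_abs, abs_of_pos h0])
    exact this
  have h1 : Summable (fun n : ℕ => ((n+1:ℕ):ℝ)^j * q^(n+1)) :=
    (summable_nat_add_iff 1).mpr hs
  have h2 := h1.mul_left q⁻¹
  apply h2.congr
  intro n
  push_cast
  rw [pow_succ]
  field_simp

lemma summable_master (k j : ℕ) {r : ℝ} (h1 : 1 ≤ r) (hr : r < 2) :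
    Summable (fun n : ℕ => c k n * (2*(n:ℝ)+1)^j * r^(2*n)) := by
  set q : ℝ := r^2/4 with hq
  have hq0 : 0 < q := by rw [hq]; nlinarith
  have hq1 : q < 1 := by rw [hq]; nlinarith
  have hs := (summable_geom_aux (j+1) hq0 hq1).mul_left (((2*k).factorial : ℝ) * B * 3^(j+1))
  apply Summable.of_nonneg_of_le _ _ hs
  · intro n
    have := c_nonneg k n
    positivity
  · intro n
    have hcb := c_bound k n
    have hc0 := c_nonneg k n
    have hB := one_le_B
    have h4p : (0:ℝ) < 4^n := by positivity
    have hrp : (0:ℝ) < r := lt_of_lt_of_le zero_lt_one h1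
    have hr2 : r^(2*n) = (r^2)^n := by rw [← pow_mul]
    have hqn : q^n = r^(2*n) / 4^n := by rw [hq, div_pow, hr2]
    have hb1 : (2*(n:ℝ)+1) ≤ 3*((n:ℝ)+1) := by push_cast; nlinarith [Nat.cast_nonneg (α := ℝ) n]
    have hb2 : (2*(n:ℝ)+1)^(j+1) ≤ (3*((n:ℝ)+1))^(j+1) := by
      apply pow_le_pow_left₀ (by positivity) hb1
    have hrn : (0:ℝ) < r^(2*n) := by positivity
    calc c k n * (2*(n:ℝ)+1)^j * r^(2*n)
        ≤ (((2*k).factorial : ℝ) * B * ((2*(n:ℝ)+1) / 4^n)) * (2*(n:ℝ)+1)^j * r^(2*n) := by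
          apply mul_le_mul_of_nonneg_right _ (le_of_lt hrn)
          apply mul_le_mul_of_nonneg_right hcb (by positivity)
      _ = ((2*k).factorial : ℝ) * B * (2*(n:ℝ)+1)^(j+1) * q^n := by
          rw [hqn, pow_succ]
          field_simp
      _ ≤ ((2*k).factorial : ℝ) * B * (3*((n:ℝ)+1))^(j+1) * q^n := by
          apply mul_le_mul_of_nonneg_right _ (le_of_lt (pow_pos hq0 n))
          apply mul_le_mul_of_nonneg_left hb2 (by positivity)
      _ = ((2*k).factorial : ℝ) * B * 3^(j+1) * (((n:ℝ)+1)^(j+1) * q^n) := by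
          rw [mul_pow]
          ring


noncomputable def F (k : ℕ) (x : ℝ) : ℝ := ∑' n : ℕ, c k n * x^(2*n)
noncomputable def F1 (k : ℕ) (x : ℝ) : ℝ := ∑' n : ℕ, c k n * (2*(n:ℝ)) * x^(2*n-1)
noncomputable def F2 (k : ℕ) (x : ℝ) : ℝ :=
  ∑' n : ℕ, c k n * (2*(n:ℝ)) * (2*(n:ℝ)-1) * x^(2*n-2)

lemma mul3_le {C a a' b b' : ℝ} (hc : 0 ≤ C) (ha0 : 0 ≤ a) (ha : a ≤ a') (hb0 : 0 ≤ b)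
    (hb : b ≤ b') : C * a * b ≤ C * a' * b' :=
  mul_le_mul (mul_le_mul_of_nonneg_left ha hc) hb hb0
    (mul_nonneg hc (le_trans ha0 ha))

lemma pow_abs_le {x r : ℝ} (hxr : |x| ≤ r) (h1 : 1 ≤ r) {a b : ℕ} (hab : a ≤ b) :
    |x|^a ≤ r^b :=
  le_trans (pow_le_pow_left₀ (abs_nonneg x) hxr a) (pow_le_pow_right₀ h1 hab)

lemma rfacts {x : ℝ} (hx : |x| < 2) :
    1 ≤ (2 + |x|)/2 ∧ (2 + |x|)/2 < 2 ∧ |x| < (2 + |x|)/2 := by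
  have := abs_nonneg x
  constructor
  · linarith
  constructor
  · linarith
  · linarith

-- generic norm bound for all three kinds of terms
lemma term_bound_F {x r : ℝ} (hxr : |x| ≤ r) (h1 : 1 ≤ r) (k n : ℕ) :
    ‖c k n * x^(2*n)‖ ≤ c k n * (2*(n:ℝ)+1)^2 * r^(2*n) := by
  rw [Real.norm_eq_abs, abs_mul, abs_pow, abs_of_nonneg (c_nonneg k n)]
  have h2 : (1:ℝ) ≤ (2*(n:ℝ)+1)^2 := by nlinarith [Nat.cast_nonneg (α := ℝ) n]
  calc c k n * |x|^(2*n) = c k n * 1 * |x|^(2*n) := by ring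
    _ ≤ c k n * (2*(n:ℝ)+1)^2 * r^(2*n) :=
      mul3_le (c_nonneg k n) zero_le_one h2 (by positivity) (pow_abs_le hxr h1 le_rfl)

lemma term_bound_F1 {x r : ℝ} (hxr : |x| ≤ r) (h1 : 1 ≤ r) (k n : ℕ) :
    ‖c k n * (2*(n:ℝ)) * x^(2*n-1)‖ ≤ c k n * (2*(n:ℝ)+1)^2 * r^(2*n) := by
  rw [Real.norm_eq_abs, abs_mul, abs_mul, abs_pow, abs_of_nonneg (c_nonneg k n),
    abs_of_nonneg (by positivity : (0:ℝ) ≤ 2*(n:ℝ))]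
  have h2 : (2*(n:ℝ)) ≤ (2*(n:ℝ)+1)^2 := by nlinarith [Nat.cast_nonneg (α := ℝ) n]
  exact mul3_le (c_nonneg k n) (by positivity) h2 (by positivity)
    (pow_abs_le hxr h1 (Nat.sub_le _ _))

lemma term_bound_F2 {x r : ℝ} (hxr : |x| ≤ r) (h1 : 1 ≤ r) (k n : ℕ) :
    ‖c k n * (2*(n:ℝ)) * (2*(n:ℝ)-1) * x^(2*n-2)‖ ≤ c k n * (2*(n:ℝ)+1)^2 * r^(2*n) := by
  rw [Real.norm_eq_abs, abs_mul, abs_mul, abs_mul, abs_pow, abs_of_nonneg (c_nonneg k n),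
    abs_of_nonneg (by positivity : (0:ℝ) ≤ 2*(n:ℝ))]
  have hn0 : (0:ℝ) ≤ (n:ℝ) := Nat.cast_nonneg n
  have habs : |2*(n:ℝ)-1| ≤ 2*(n:ℝ)+1 := by
    rw [abs_le]; constructor <;> linarith
  have h2 : (2*(n:ℝ)) * |2*(n:ℝ)-1| ≤ (2*(n:ℝ)+1)^2 := by nlinarith [abs_nonneg (2*(n:ℝ)-1)]
  calc c k n * (2*(n:ℝ)) * |2*(n:ℝ)-1| * |x|^(2*n-2)
      = c k n * ((2*(n:ℝ)) * |2*(n:ℝ)-1|) * |x|^(2*n-2) := by ring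
    _ ≤ c k n * (2*(n:ℝ)+1)^2 * r^(2*n) :=
      mul3_le (c_nonneg k n) (by positivity) h2 (by positivity)
        (pow_abs_le hxr h1 (Nat.sub_le _ _))

lemma summable_F (k : ℕ) {x : ℝ} (hx : |x| < 2) : Summable (fun n => c k n * x^(2*n)) := by
  obtain ⟨h1, h2, h3⟩ := rfacts hx
  exact Summable.of_norm_bounded (summable_master k 2 h1 h2)
    (fun n => term_bound_F (le_of_lt h3) h1 k n)

lemma summable_F1 (k : ℕ) {x : ℝ} (hx : |x| < 2) :
    Summable (fun n => c k n * (2*(n:ℝ)) * x^(2*n-1)) := by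
  obtain ⟨h1, h2, h3⟩ := rfacts hx
  exact Summable.of_norm_bounded (summable_master k 2 h1 h2)
    (fun n => term_bound_F1 (le_of_lt h3) h1 k n)

lemma summable_F2 (k : ℕ) {x : ℝ} (hx : |x| < 2) :
    Summable (fun n => c k n * (2*(n:ℝ)) * (2*(n:ℝ)-1) * x^(2*n-2)) := by
  obtain ⟨h1, h2, h3⟩ := rfacts hx
  exact Summable.of_norm_bounded (summable_master k 2 h1 h2)
    (fun n => term_bound_F2 (le_of_lt h3) h1 k n)

lemma summable_sq (k : ℕ) {x : ℝ} (hx : |x| < 2) :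
    Summable (fun n : ℕ => (4*(n:ℝ)^2) * c k n * x^(2*n)) := by
  obtain ⟨h1, h2, h3⟩ := rfacts hx
  apply Summable.of_norm_bounded ((summable_master k 2 h1 h2).mul_left 4)
  intro n
  rw [Real.norm_eq_abs, abs_mul, abs_mul, abs_pow,
    abs_of_nonneg (by positivity : (0:ℝ) ≤ 4*(n:ℝ)^2), abs_of_nonneg (c_nonneg k n)]
  have hn0 : (0:ℝ) ≤ (n:ℝ) := Nat.cast_nonneg n
  have h2' : (n:ℝ)^2 ≤ (2*(n:ℝ)+1)^2 := by nlinarith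
  calc 4*(n:ℝ)^2 * c k n * |x|^(2*n) = 4 * (c k n * (n:ℝ)^2 * |x|^(2*n)) := by ring
    _ ≤ 4 * (c k n * (2*(n:ℝ)+1)^2 * ((2 + |x|)/2)^(2*n)) :=
      mul_le_mul_of_nonneg_left
        (mul3_le (c_nonneg k n) (by positivity) h2' (by positivity)
          (pow_abs_le (le_of_lt h3) h1 le_rfl)) (by norm_num)

lemma summable_zero_pt (k : ℕ) : Summable (fun n => c k n * (0:ℝ)^(2*n)) := by
  apply summable_of_ne_finset_zero (s := {0})
  intro n hn
  simp only [Finset.mem_singleton] at hn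
  rw [zero_pow (by omega), mul_zero]

lemma hasDerivAt_F (k : ℕ) {x : ℝ} (hx : |x| < 2) : HasDerivAt (F k) (F1 k x) x := by
  obtain ⟨h1, h2, h3⟩ := rfacts hx
  set r := (2 + |x|)/2 with hrdef
  have hr0 : 0 < r := lt_of_lt_of_le zero_lt_one h1
  have key := hasDerivAt_tsum_of_isPreconnected
    (u := fun n => c k n * (2*(n:ℝ)+1)^2 * r^(2*n))
    (g := fun (n : ℕ) (z : ℝ) => c k n * z^(2*n))
    (g' := fun (n : ℕ) (y : ℝ) => c k n * (2*(n:ℝ)) * y^(2*n-1))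
    (t := Set.Ioo (-r) r) (y₀ := 0) (y := x)
    (summable_master k 2 h1 h2) isOpen_Ioo (convex_Ioo _ _).isPreconnected
    ?_ ?_ (by rw [Set.mem_Ioo]; constructor <;> linarith) (summable_zero_pt k)
    (by rw [Set.mem_Ioo, ← abs_lt]; exact h3)
  · exact key
  · intro n y _
    have h := (hasDerivAt_pow (2*n) y).const_mul (c k n)
    refine h.congr_deriv ?_
    push_cast
    ring
  · intro n y hy
    have hy' : |y| ≤ r := le_of_lt (abs_lt.mpr ⟨hy.1, hy.2⟩)
    exact term_bound_F1 hy' h1 k n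

lemma hasDerivAt_F1 (k : ℕ) {x : ℝ} (hx : |x| < 2) : HasDerivAt (F1 k) (F2 k x) x := by
  obtain ⟨h1, h2, h3⟩ := rfacts hx
  set r := (2 + |x|)/2 with hrdef
  have hr0 : 0 < r := lt_of_lt_of_le zero_lt_one h1
  have key := hasDerivAt_tsum_of_isPreconnected
    (u := fun n => c k n * (2*(n:ℝ)+1)^2 * r^(2*n))
    (g := fun (n : ℕ) (z : ℝ) => c k n * (2*(n:ℝ)) * z^(2*n-1))
    (g' := fun (n : ℕ) (y : ℝ) => c k n * (2*(n:ℝ)) * (2*(n:ℝ)-1) * y^(2*n-2))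
    (t := Set.Ioo (-r) r) (y₀ := 0) (y := x)
    (summable_master k 2 h1 h2) isOpen_Ioo (convex_Ioo _ _).isPreconnected
    ?_ ?_ (by rw [Set.mem_Ioo]; constructor <;> linarith) ?_
    (by rw [Set.mem_Ioo, ← abs_lt]; exact h3)
  · exact key
  · intro n y _
    rcases n with _ | m
    · simpa using hasDerivAt_const y (0:ℝ)
    · have h := (hasDerivAt_pow (2*(m+1)-1) y).const_mul (c k (m+1) * (2*((m+1:ℕ):ℝ)))
      refine h.congr_deriv ?_
      have e1 : 2*(m+1)-1-1 = 2*(m+1)-2 := by omega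
      rw [e1, Nat.cast_sub (show 1 ≤ 2*(m+1) by omega)]
      try push_cast
      try ring
  · intro n y hy
    have hy' : |y| ≤ r := le_of_lt (abs_lt.mpr ⟨hy.1, hy.2⟩)
    exact term_bound_F2 hy' h1 k n
  · apply summable_of_ne_finset_zero (s := {0})
    intro n hn
    simp only [Finset.mem_singleton] at hn
    show c k n * (2*(n:ℝ)) * (0:ℝ)^(2*n-1) = 0
    rw [zero_pow (by omega), mul_zero]

set_option maxHeartbeats 1000000 in
lemma F_ode (k : ℕ) {x : ℝ} (hx : |x| < 2) :
    (4 - x^2) * F2 (k+1) x - x * F1 (k+1) x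
      = (8*((k:ℝ)+1)) * (2*((k:ℝ)+1)-1) * F k x := by
  have s2 := summable_F2 (k+1) hx
  have s1 := summable_F1 (k+1) hx
  have s0 := summable_F k hx
  have sB := summable_sq (k+1) hx
  unfold F F1 F2
  rw [← tsum_mul_left, ← tsum_mul_left, ← tsum_mul_left,
    ← Summable.tsum_sub (s2.mul_left _) (s1.mul_left _)]
  have congr1 : ∀ n:ℕ, (4 - x^2) * (c (k+1) n * (2*(n:ℝ)) * (2*(n:ℝ)-1) * x^(2*n-2))
        - x * (c (k+1) n * (2*(n:ℝ)) * x^(2*n-1))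
      = (4*(2*(n:ℝ))*(2*(n:ℝ)-1)) * c (k+1) n * x^(2*n-2)
        - (4*(n:ℝ)^2) * c (k+1) n * x^(2*n) := by
    intro n
    rcases n with _ | m
    · norm_num
    · have e2 : x^(2*(m+1)) = x^(2*(m+1)-2) * x^2 := by
        rw [← pow_add]; congr 1 <;> omega
      have e1 : x^(2*(m+1)-1) = x^(2*(m+1)-2) * x := by
        rw [← pow_succ]; congr 1 <;> omega
      rw [e2, e1]
      push_cast
      ring
  rw [tsum_congr congr1]
  have sA : Summable (fun n:ℕ => (4*(2*(n:ℝ))*(2*(n:ℝ)-1)) * c (k+1) n * x^(2*n-2)) := by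
    apply (s2.mul_left 4).congr
    intro n
    ring
  rw [Summable.tsum_sub sA sB]
  have hA0 : (4*(2*((0:ℕ):ℝ))*(2*((0:ℕ):ℝ)-1)) * c (k+1) 0 * x^(2*0-2) = 0 := by
    norm_num
  rw [Summable.tsum_eq_zero_add sA, hA0, zero_add]
  have sA' : Summable (fun n:ℕ =>
      (4*(2*((n+1:ℕ):ℝ))*(2*((n+1:ℕ):ℝ)-1)) * c (k+1) (n+1) * x^(2*(n+1)-2)) :=
    (summable_nat_add_iff 1).mpr sA
  rw [← Summable.tsum_sub sA' sB]
  apply tsum_congr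
  intro n
  have e0 : 2*(n+1)-2 = 2*n := by omega
  have hrec := c_rec k n
  rw [e0]
  push_cast
  linear_combination x^(2*n) * hrec


noncomputable def uu (y : ℝ) : ℝ := 2 * Real.arcsin (y/2)
noncomputable def ss (y : ℝ) : ℝ := Real.sqrt (1 - (y/2)^2)
noncomputable def Df (k : ℕ) (y : ℝ) : ℝ := (2*(k:ℝ)+2) * (uu y)^(2*k+1) * (ss y)⁻¹
noncomputable def Ef (k : ℕ) (x : ℝ) : ℝ :=
  (2*(k:ℝ)+2) * ((2*(k:ℝ)+1) * (uu x)^(2*k) * (ss x)⁻¹) * (ss x)⁻¹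
    + ((2*(k:ℝ)+2) * (uu x)^(2*k+1)) * (-(-x/(4*ss x))/(ss x)^2)

lemma q_pos {x : ℝ} (hx : |x| < 2) : 0 < 1 - (x/2)^2 := by
  have h := abs_lt.mp hx
  nlinarith [h.1, h.2]

lemma ss_pos {x : ℝ} (hx : |x| < 2) : 0 < ss x := Real.sqrt_pos.mpr (q_pos hx)

lemma ss_sq {x : ℝ} (hx : |x| < 2) : ss x ^ 2 = 1 - (x/2)^2 := Real.sq_sqrt (le_of_lt (q_pos hx))

lemma hasDerivAt_uu {x : ℝ} (hx : |x| < 2) : HasDerivAt uu (ss x)⁻¹ x := by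
  have h := abs_lt.mp hx
  have h1 : x/2 ≠ -1 := by intro hc; linarith [h.1]
  have h2 : x/2 ≠ 1 := by intro hc; linarith [h.2]
  have inner : HasDerivAt (fun y : ℝ => y/2) (1/2) x := (hasDerivAt_id x).div_const 2
  have harc : HasDerivAt (fun y : ℝ => Real.arcsin (y/2))
      (1 / Real.sqrt (1 - (x/2)^2) * (1/2)) x :=
    by have := (Real.hasDerivAt_arcsin h1 h2).comp x inner; exact this
  have hm := harc.const_mul (2:ℝ)
  refine hm.congr_deriv ?_
  unfold ss
  rw [one_div]
  ring

lemma hasDerivAt_ss {x : ℝ} (hx : |x| < 2) : HasDerivAt ss (-x/(4 * ss x)) x := by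
  have hq := q_pos hx
  have hs0 : Real.sqrt (1 - (x/2)^2) ≠ 0 := ne_of_gt (Real.sqrt_pos.mpr hq)
  have h1 : HasDerivAt (fun y : ℝ => y/2) (1/2) x := (hasDerivAt_id x).div_const 2
  have h2 := h1.pow 2
  have inner : HasDerivAt (fun y : ℝ => 1 - (y/2)^2) (-x/2) x := by
    have h3 := h2.const_sub 1
    refine h3.congr_deriv ?_
    rw [pow_one]
    ring
  have hsq : HasDerivAt (fun y : ℝ => Real.sqrt (1 - (y/2)^2))
      (1 / (2 * Real.sqrt (1 - (x/2)^2)) * (-x/2)) x :=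
    (Real.hasDerivAt_sqrt (ne_of_gt hq)).comp x inner
  refine hsq.congr_deriv ?_
  unfold ss
  field_simp
  ring

lemma hasDerivAt_pow_uu (k : ℕ) {x : ℝ} (hx : |x| < 2) :
    HasDerivAt (fun y => (uu y)^(2*k+2)) (Df k x) x := by
  have h := (hasDerivAt_uu hx).pow (2*k+2)
  refine h.congr_deriv ?_
  unfold Df
  push_cast
  ring

lemma hasDerivAt_Df (k : ℕ) {x : ℝ} (hx : |x| < 2) :
    HasDerivAt (Df k) (Ef k x) x := by
  have h1 := (hasDerivAt_uu hx).pow (2*k+1)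
  have h2 := h1.const_mul (2*(k:ℝ)+2)
  have h3 := (hasDerivAt_ss hx).inv (ne_of_gt (ss_pos hx))
  have h4 := h2.mul h3
  refine h4.congr_deriv ?_
  unfold Ef
  push_cast
  simp only [Pi.inv_apply, Pi.pow_apply]

lemma f_ode (k : ℕ) {x : ℝ} (hx : |x| < 2) :
    (4 - x^2) * Ef k x - x * Df k x = (8*(k:ℝ)+8) * (2*(k:ℝ)+1) * (uu x)^(2*k) := by
  have hs := ss_pos hx
  have hs2 := ss_sq hx
  have hsne : ss x ≠ 0 := ne_of_gt hs
  have h4 : 4 - x^2 = 4 * (ss x)^2 := by rw [hs2]; ring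
  unfold Ef Df
  rw [h4]
  have e1 : (uu x)^(2*k+1) = (uu x)^(2*k) * uu x := pow_succ _ _
  rw [e1]
  field_simp
  ring

lemma const_on_Ioo {g : ℝ → ℝ} (h : ∀ y ∈ Set.Ioo (-2:ℝ) 2, HasDerivAt g 0 y) {x : ℝ}
    (hx : x ∈ Set.Ioo (-2:ℝ) 2) : g x = g 0 := by
  have h0 : (0:ℝ) ∈ Set.Ioo (-2:ℝ) 2 := by rw [Set.mem_Ioo]; norm_num
  apply (convex_Ioo (-2:ℝ) 2).is_const_of_fderivWithin_eq_zero
    (fun y hy => (h y hy).differentiableAt.differentiableWithinAt) ?_ hx h0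
  intro y hy
  rw [fderivWithin_of_isOpen isOpen_Ioo hy, (h y hy).hasFDerivAt.fderiv]
  refine ContinuousLinearMap.ext fun z => ?_
  simp

lemma uu_zero : uu 0 = 0 := by
  unfold uu
  norm_num [Real.arcsin_zero]

lemma F1_zero (k : ℕ) : F1 (k+1) 0 = 0 := by
  unfold F1
  have h : ∀ n : ℕ, c (k+1) n * (2*(n:ℝ)) * (0:ℝ)^(2*n-1) = 0 := by
    intro n
    rcases n with _ | m
    · norm_num
    · rw [zero_pow (by omega : 2*(m+1)-1 ≠ 0), mul_zero]
  rw [tsum_congr h, tsum_zero]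

lemma c_succ_zero (k : ℕ) : c (k+1) 0 = 0 := by
  unfold c
  rw [if_neg (Nat.succ_ne_zero k)]
  norm_num

lemma F_zero (k : ℕ) : F (k+1) 0 = 0 := by
  unfold F
  have h : ∀ n : ℕ, c (k+1) n * (0:ℝ)^(2*n) = if n = 0 then c (k+1) 0 else 0 := by
    intro n
    rcases n with _ | m
    · norm_num
    · rw [if_neg (Nat.succ_ne_zero m), zero_pow (by omega : 2*(m+1) ≠ 0), mul_zero]
  rw [tsum_congr h, tsum_ite_eq, c_succ_zero]

lemma step1 (k : ℕ) (ih : ∀ {y : ℝ}, |y| < 2 → (uu y)^(2*k) = F k y)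
    {x : ℝ} (hx : |x| < 2) : Df k x = F1 (k+1) x := by
  set G : ℝ → ℝ := fun y => ss y * (Df k y - F1 (k+1) y) with hGdef
  have hGd : ∀ y ∈ Set.Ioo (-2:ℝ) 2, HasDerivAt G 0 y := by
    intro y hy
    have hy2 : |y| < 2 := abs_lt.mpr ⟨hy.1, hy.2⟩
    have hD := hasDerivAt_Df k hy2
    have hF1 := hasDerivAt_F1 (k+1) hy2
    have hmul := (hasDerivAt_ss hy2).mul (hD.sub hF1)
    have hODEf := f_ode k hy2
    have hODEF := F_ode k hy2
    have hIH : (uu y)^(2*k) = F k y := ih hy2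
    have hs := ss_pos hy2
    have hsne : ss y ≠ 0 := ne_of_gt hs
    have hcoef : (8*(k:ℝ)+8) * (2*(k:ℝ)+1) * (uu y)^(2*k)
        = (8*((k:ℝ)+1)) * (2*((k:ℝ)+1)-1) * F k y := by
      rw [hIH]; ring
    have hcancel : (4 - y^2) * (Ef k y - F2 (k+1) y) - y * (Df k y - F1 (k+1) y) = 0 := by
      linear_combination hODEf - hODEF + hcoef
    have hval : (-y/(4*ss y)) * (Df k y - F1 (k+1) y) + ss y * (Ef k y - F2 (k+1) y) = 0 := by
      have h4 : 4 - y^2 = 4*(ss y)^2 := by rw [ss_sq hy2]; ring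
      rw [h4] at hcancel
      field_simp
      linear_combination hcancel
    have : HasDerivAt G ((-y/(4*ss y)) * (Df k y - F1 (k+1) y)
        + ss y * (Ef k y - F2 (k+1) y)) y := hmul
    rwa [hval] at this
  have hx' : x ∈ Set.Ioo (-2:ℝ) 2 := by
    rw [Set.mem_Ioo]
    exact ⟨(abs_lt.mp hx).1, (abs_lt.mp hx).2⟩
  have hG0 : G x = G 0 := const_on_Ioo hGd hx'
  have hGz : G 0 = 0 := by
    have hDf0 : Df k 0 = 0 := by
      unfold Df
      rw [uu_zero, zero_pow (by omega : 2*k+1 ≠ 0)]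
      ring
    show ss 0 * (Df k 0 - F1 (k+1) 0) = 0
    rw [hDf0, F1_zero]
    ring
  have hfin : ss x * (Df k x - F1 (k+1) x) = 0 := hG0.trans hGz
  have hsne : ss x ≠ 0 := ne_of_gt (ss_pos hx)
  rcases mul_eq_zero.mp hfin with h | h
  · exact absurd h hsne
  · linarith [h]

lemma key (k : ℕ) : ∀ {x : ℝ}, |x| < 2 → (uu x)^(2*k) = F k x := by
  induction k with
  | zero =>
    intro x hx
    rw [Nat.mul_zero, pow_zero]
    unfold F
    have h : ∀ n : ℕ, c 0 n * x^(2*n) = if n = 0 then (1:ℝ) else 0 := by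
      intro n
      unfold c
      rw [if_pos rfl]
      rcases n with _ | m
      · norm_num
      · rw [if_neg (Nat.succ_ne_zero m), zero_mul]
    rw [tsum_congr h, tsum_ite_eq]
  | succ k ih =>
    intro x hx
    have hstep1 : ∀ y : ℝ, |y| < 2 → Df k y = F1 (k+1) y := fun y hy => step1 k (fun hz => ih hz) hy
    set H : ℝ → ℝ := fun y => (uu y)^(2*k+2) - F (k+1) y with hHdef
    have hHd : ∀ y ∈ Set.Ioo (-2:ℝ) 2, HasDerivAt H 0 y := by
      intro y hy
      have hy2 : |y| < 2 := abs_lt.mpr ⟨hy.1, hy.2⟩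
      have := (hasDerivAt_pow_uu k hy2).sub (hasDerivAt_F (k+1) hy2)
      rwa [hstep1 y hy2, sub_self] at this
    have hx' : x ∈ Set.Ioo (-2:ℝ) 2 := by
      rw [Set.mem_Ioo]
      exact ⟨(abs_lt.mp hx).1, (abs_lt.mp hx).2⟩
    have hH0 : H x = H 0 := const_on_Ioo hHd hx'
    have hHz : H 0 = 0 := by
      show (uu 0)^(2*k+2) - F (k+1) 0 = 0
      rw [uu_zero, F_zero, zero_pow (by omega : 2*k+2 ≠ 0)]
      ring
    have hfin : (uu x)^(2*k+2) - F (k+1) x = 0 := hH0.trans hHz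
    have he : 2*(k+1) = 2*k+2 := by omega
    rw [he]
    linarith [hfin]


end ArcsinPow

theorem arcsin_pow_expansion (k : ℕ) (hk : 1 ≤ k) (X : ℝ) (hX : |X| < 2) :
    (2 * Real.arcsin (X / 2)) ^ (2 * k) =
      ((2 * k).factorial : ℝ) *
        ∑' n : ℕ, if k ≤ n then
          H2 (k - 1) n / ((n : ℝ) ^ 2 * ((2 * n).choose n)) * X ^ (2 * n)
        else 0 := by
  obtain ⟨j, rfl⟩ : ∃ j, k = j + 1 := ⟨k - 1, by omega⟩
  have hkey := ArcsinPow.key (j+1) (x := X) hX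
  rw [show (2 * Real.arcsin (X / 2)) = ArcsinPow.uu X from rfl, hkey]
  unfold ArcsinPow.F
  rw [← tsum_mul_left]
  apply tsum_congr
  intro n
  by_cases hn : j + 1 ≤ n
  · rw [if_pos hn, ArcsinPow.c_succ j n]
    rw [Nat.add_sub_cancel]
    ring
  · rw [if_neg hn, mul_zero]
    rcases Nat.eq_zero_or_pos n with rfl | hpos
    · rw [ArcsinPow.c_succ_zero, zero_mul]
    · have hz : H2 j n = 0 := ArcsinPow.H2_eq_zero (by omega)
      rw [ArcsinPow.c_succ, hz]
      simp
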